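/- Let θ₁, θ₂, θ₁₂ > 0 and let T₁, T₂, U be independent random variables on a probability space, where P(Tᵢ > t) = exp(−θᵢ t) for all t ≥ 0 (i = 1, 2) and U is uniformly distributed on (0,1). With Q(u) = −ln(1−u)/θ₁₂, R = min(T₁, Q(U)) and S = min(T₂, Q(1−U)), the probability of the singular set is P(exp(−θ₁₂ R) + exp(−θ₁₂ S) = 1) = ∫₀¹ u^{θ₁/θ₁₂} (1−u)^{θ₂/θ₁₂} du, i.e. it equals the Beta function value B(θ₁/θ₁₂ + 1, θ₂/θ₁₂ + 1). -/

import Mathlib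

open MeasureTheory ProbabilityTheory Real Filter

lemma bnmo_surv {Ω : Type*} [MeasureSpace Ω] [IsProbabilityMeasure (ℙ : Measure Ω)]
    (θ : ℝ) (T : Ω → ℝ)
    (hT : ∀ t : ℝ, 0 ≤ t → ℙ {ω | T ω > t} = ENNReal.ofReal (exp (-θ * t)))
    (c : ℝ) (hc : 0 ≤ c) : ℙ {ω | c ≤ T ω} = ENNReal.ofReal (exp (-θ * c)) := by
  refine le_antisymm ?_ ?_
  · rcases eq_or_lt_of_le hc with h0 | h0
    · rw [← h0]
      simp only [mul_zero, exp_zero, ENNReal.ofReal_one]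
      exact prob_le_one
    · have key : ∀ n : ℕ, ℙ {ω | c ≤ T ω} ≤ ENNReal.ofReal (exp (-θ * (c - c / (n + 1)))) := by
        intro n
        have hnn : (0:ℝ) ≤ c - c / (n + 1) := by
          have : c / (n+1) ≤ c := div_le_self hc (by linarith [Nat.cast_nonneg (α:=ℝ) n])
          linarith
        rw [← hT _ hnn]
        refine measure_mono fun ω hω => ?_
        have : c - c / (n+1) < c := by
          have : (0:ℝ) < c / (n+1) := by positivity
          linarith
        exact lt_of_lt_of_le this hω
      have htend : Tendsto (fun n : ℕ => ENNReal.ofReal (exp (-θ * (c - c / (n + 1)))))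
          atTop (nhds (ENNReal.ofReal (exp (-θ * c)))) := by
        apply ENNReal.tendsto_ofReal
        apply (Real.continuous_exp.tendsto _).comp
        have h1 : Tendsto (fun n : ℕ => c / (n + 1)) atTop (nhds 0) := by
          have := tendsto_one_div_add_atTop_nhds_zero_nat.const_mul c
          simpa [div_eq_mul_inv] using this
        have h2 : Tendsto (fun n : ℕ => c - c / (n + 1)) atTop (nhds c) := by
          simpa using tendsto_const_nhds.sub h1
        simpa using h2.const_mul (-θ)
      exact ge_of_tendsto' htend key
  · rw [← hT c hc]
    exact measure_mono fun ω hω => show c ≤ T ω from le_of_lt hω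

lemma bnmo_exp_min (θ12 t q : ℝ) (hθ12 : 0 < θ12) :
    exp (-θ12 * min t q) = max (exp (-θ12 * t)) (exp (-θ12 * q)) := by
  rcases le_total t q with h | h
  · rw [min_eq_left h, max_eq_left (exp_le_exp.mpr (by nlinarith))]
  · rw [min_eq_right h, max_eq_right (exp_le_exp.mpr (by nlinarith))]

lemma bnmo_core (θ12 : ℝ) (hθ12 : 0 < θ12) (Q : ℝ → ℝ)
    (hQ : ∀ u : ℝ, Q u = -Real.log (1 - u) / θ12)
    (u t1 t2 : ℝ) (hu : u ∈ Set.Ioo (0:ℝ) 1) :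
    exp (-θ12 * min t1 (Q u)) + exp (-θ12 * min t2 (Q (1 - u))) = 1 ↔
      Q u ≤ t1 ∧ Q (1 - u) ≤ t2 := by
  obtain ⟨hu0, hu1⟩ := hu
  have e1 : exp (-θ12 * Q u) = 1 - u := by
    rw [hQ, show -θ12 * (-Real.log (1 - u) / θ12) = Real.log (1 - u) by field_simp]
    exact Real.exp_log (by linarith)
  have e2 : exp (-θ12 * Q (1 - u)) = u := by
    rw [hQ, show (1 - (1 - u)) = u by ring,
      show -θ12 * (-Real.log u / θ12) = Real.log u by field_simp]
    exact Real.exp_log hu0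
  rw [bnmo_exp_min θ12 t1 (Q u) hθ12, bnmo_exp_min θ12 t2 (Q (1-u)) hθ12, e1, e2]
  constructor
  · intro h
    have A := le_max_right (exp (-θ12 * t1)) (1 - u)
    have B := le_max_right (exp (-θ12 * t2)) u
    have hx : exp (-θ12 * t1) ≤ 1 - u := le_of_max_le_left (by linarith)
    have hy : exp (-θ12 * t2) ≤ u := le_of_max_le_left (by linarith)
    constructor
    · have := exp_le_exp.mp (show exp (-θ12 * t1) ≤ exp (-θ12 * Q u) by rw [e1]; exact hx)
      nlinarith
    · have := exp_le_exp.mp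
        (show exp (-θ12 * t2) ≤ exp (-θ12 * Q (1 - u)) by rw [e2]; exact hy)
      nlinarith
  · rintro ⟨h1, h2⟩
    rw [max_eq_right (by rw [← e1]; exact exp_le_exp.mpr (by nlinarith)),
      max_eq_right (by rw [← e2]; exact exp_le_exp.mpr (by nlinarith))]
    ring

/-- The probability of the singular part of the BNMO model equals the Beta integral
`∫₀¹ u^{θ₁/θ₁₂}(1−u)^{θ₂/θ₁₂} du = B(θ₁/θ₁₂+1, θ₂/θ₁₂+1)`. -/
theorem bnmo_singular_probability
    {Ω : Type*} [MeasureSpace Ω] [IsProbabilityMeasure (ℙ : Measure Ω)]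
    (θ1 θ2 θ12 : ℝ) (hθ1 : 0 < θ1) (hθ2 : 0 < θ2) (hθ12 : 0 < θ12)
    (T1 T2 U : Ω → ℝ)
    (hT1m : Measurable T1) (hT2m : Measurable T2) (hUm : Measurable U)
    (hindep : iIndepFun ![T1, T2, U] ℙ)
    (hT1 : ∀ t : ℝ, 0 ≤ t → ℙ {ω | T1 ω > t} = ENNReal.ofReal (exp (-θ1 * t)))
    (hT2 : ∀ t : ℝ, 0 ≤ t → ℙ {ω | T2 ω > t} = ENNReal.ofReal (exp (-θ2 * t)))
    (hU : Measure.map U ℙ = volume.restrict (Set.Ioo (0 : ℝ) 1))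
    (Q : ℝ → ℝ) (hQ : ∀ u : ℝ, Q u = -Real.log (1 - u) / θ12)
    (R S : Ω → ℝ)
    (hR : ∀ ω, R ω = min (T1 ω) (Q (U ω)))
    (hS : ∀ ω, S ω = min (T2 ω) (Q (1 - U ω))) :
    ℙ {ω | exp (-θ12 * R ω) + exp (-θ12 * S ω) = 1} =
      ENNReal.ofReal (∫ u in (0 : ℝ)..1, u ^ (θ1 / θ12) * (1 - u) ^ (θ2 / θ12)) := by
  have hQm : Measurable Q := by
    have hQe : Q = fun u => -Real.log (1 - u) / θ12 := funext hQ
    rw [hQe]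
    exact ((Real.measurable_log.comp (measurable_const.sub measurable_id)).neg).div_const θ12
  set μ1 := Measure.map T1 ℙ with hμ1
  set μ2 := Measure.map T2 ℙ with hμ2
  haveI : IsProbabilityMeasure μ1 := Measure.isProbabilityMeasure_map hT1m.aemeasurable
  haveI : IsProbabilityMeasure μ2 := Measure.isProbabilityMeasure_map hT2m.aemeasurable
  have hfm : ∀ i, Measurable (![T1, T2, U] i) := by
    intro i; fin_cases i
    · exact hT1m
    · exact hT2m
    · exact hUm
  have hμ1Ici : ∀ c : ℝ, 0 ≤ c → μ1 (Set.Ici c) = ENNReal.ofReal (exp (-θ1 * c)) := by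
    intro c hc
    rw [hμ1, Measure.map_apply hT1m measurableSet_Ici]
    exact bnmo_surv θ1 T1 hT1 c hc
  have hμ2Ici : ∀ c : ℝ, 0 ≤ c → μ2 (Set.Ici c) = ENNReal.ofReal (exp (-θ2 * c)) := by
    intro c hc
    rw [hμ2, Measure.map_apply hT2m measurableSet_Ici]
    exact bnmo_surv θ2 T2 hT2 c hc
  have hGc : ℙ (U ⁻¹' Set.Ioo (0:ℝ) 1)ᶜ = 0 := by
    have h1 : ℙ (U ⁻¹' Set.Ioo (0:ℝ) 1) = 1 := by
      rw [← Measure.map_apply hUm measurableSet_Ioo, hU,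
        Measure.restrict_apply measurableSet_Ioo]
      simp [Real.volume_Ioo]
    rw [measure_compl (hUm measurableSet_Ioo) (measure_ne_top _ _), h1, measure_univ, tsub_self]
  have hEF : {ω | exp (-θ12 * R ω) + exp (-θ12 * S ω) = 1} ∩ (U ⁻¹' Set.Ioo (0:ℝ) 1)
      = {ω | Q (U ω) ≤ T1 ω ∧ Q (1 - U ω) ≤ T2 ω} ∩ (U ⁻¹' Set.Ioo (0:ℝ) 1) := by
    ext ω
    simp only [Set.mem_inter_iff, Set.mem_setOf_eq, Set.mem_preimage, and_congr_left_iff]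
    intro hu
    rw [hR, hS]
    exact bnmo_core θ12 hθ12 Q hQ (U ω) (T1 ω) (T2 ω) hu
  have hstep : ℙ {ω | exp (-θ12 * R ω) + exp (-θ12 * S ω) = 1}
      = ℙ {ω | Q (U ω) ≤ T1 ω ∧ Q (1 - U ω) ≤ T2 ω} := by
    rw [← measure_inter_conull (s := {ω | exp (-θ12 * R ω) + exp (-θ12 * S ω) = 1}) hGc, hEF,
      measure_inter_conull hGc]
  rw [hstep]
  -- independence and pushforward
  have hpairm : Measurable fun ω => (U ω, T2 ω) := hUm.prodMk hT2m
  have hindep1 : IndepFun (fun ω => (U ω, T2 ω)) T1 ℙ := by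
    have h := hindep.indepFun_prodMk hfm 2 1 0 (by decide) (by decide)
    simpa using h
  have hindep2 : IndepFun U T2 ℙ := by
    have h := hindep.indepFun (show (2 : Fin 3) ≠ 1 by decide)
    simpa using h
  have hmapPair : Measure.map (fun ω => (U ω, T2 ω)) ℙ
      = (volume.restrict (Set.Ioo (0:ℝ) 1)).prod μ2 := by
    rw [← hU, hμ2]
    exact (indepFun_iff_map_prod_eq_prod_map_map hUm.aemeasurable hT2m.aemeasurable).mp hindep2
  have hmapV : Measure.map (fun ω => ((U ω, T2 ω), T1 ω)) ℙ
      = ((volume.restrict (Set.Ioo (0:ℝ) 1)).prod μ2).prod μ1 := by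
    rw [← hmapPair, hμ1]
    exact (indepFun_iff_map_prod_eq_prod_map_map hpairm.aemeasurable hT1m.aemeasurable).mp hindep1
  set C : Set ((ℝ × ℝ) × ℝ) :=
    {p | Q (1 - p.1.1) ≤ p.1.2} ∩ {p | Q p.1.1 ≤ p.2} with hCdef
  have hCm : MeasurableSet C :=
    (measurableSet_le (hQm.comp (measurable_const.sub measurable_fst.fst)) measurable_fst.snd).inter
      (measurableSet_le (hQm.comp measurable_fst.fst) measurable_snd)
  have hpre : {ω | Q (U ω) ≤ T1 ω ∧ Q (1 - U ω) ≤ T2 ω}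
      = (fun ω => ((U ω, T2 ω), T1 ω)) ⁻¹' C := by
    ext ω
    simp only [hCdef, Set.mem_setOf_eq, Set.mem_preimage, Set.mem_inter_iff]
    tauto
  rw [hpre, ← Measure.map_apply (hpairm.prodMk hT1m) hCm, hmapV,
    Measure.prod_apply hCm,
    lintegral_prod _ (measurable_measure_prodMk_left hCm).aemeasurable]
  -- now an iterated integral over the restricted Lebesgue measure
  have hinner : ∀ u ∈ Set.Ioo (0:ℝ) 1,
      (∫⁻ t2, μ1 (Prod.mk (u, t2) ⁻¹' C) ∂μ2)
        = ENNReal.ofReal ((1 - u) ^ (θ1/θ12) * u ^ (θ2/θ12)) := by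
    intro u hu
    obtain ⟨hu0, hu1⟩ := hu
    have hQu : 0 ≤ Q u := by
      rw [hQ]
      apply div_nonneg _ hθ12.le
      rw [neg_nonneg]
      exact Real.log_nonpos (by linarith) (by linarith)
    have hQu' : 0 ≤ Q (1 - u) := by
      rw [hQ]
      apply div_nonneg _ hθ12.le
      rw [neg_nonneg, show (1 - (1 - u)) = u by ring]
      exact Real.log_nonpos (by linarith) (by linarith)
    have hfun : (fun t2 => μ1 (Prod.mk (u, t2) ⁻¹' C))
        = Set.indicator (Set.Ici (Q (1 - u))) (fun _ => μ1 (Set.Ici (Q u))) := by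
      funext t2
      rcases le_or_gt (Q (1 - u)) t2 with h | h
      · rw [Set.indicator_of_mem (Set.mem_Ici.mpr h)]
        congr 1
        ext t1
        simp [hCdef, h, Set.mem_Ici]
      · rw [Set.indicator_of_notMem (by simpa using not_le.mpr h)]
        have hemp : Prod.mk (u, t2) ⁻¹' C = ∅ := by
          ext t1
          simp [hCdef, not_le.mpr h]
        simp [hemp]
    rw [hfun, lintegral_indicator measurableSet_Ici, setLIntegral_const,
      hμ1Ici _ hQu, hμ2Ici _ hQu', ← ENNReal.ofReal_mul (exp_nonneg _)]
    congr 1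
    have r1 : exp (-θ1 * Q u) = (1 - u) ^ (θ1/θ12) := by
      rw [Real.rpow_def_of_pos (by linarith), hQ]
      congr 1
      field_simp
    have r2 : exp (-θ2 * Q (1 - u)) = u ^ (θ2/θ12) := by
      rw [Real.rpow_def_of_pos hu0, hQ, show (1 - (1 - u)) = u by ring]
      congr 1
      field_simp
    rw [r1, r2]
  rw [setLIntegral_congr_fun measurableSet_Ioo hinner]
  -- convert the lintegral to the Bochner integral
  have hm : Measurable fun u : ℝ => (1 - u) ^ (θ1/θ12) * u ^ (θ2/θ12) := by
    have c1 : Continuous fun u : ℝ => (1 - u) ^ (θ1/θ12) :=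
      (Real.continuous_rpow_const (div_pos hθ1 hθ12).le).comp
        (continuous_const.sub continuous_id)
    have c2 : Continuous fun u : ℝ => u ^ (θ2/θ12) :=
      Real.continuous_rpow_const (div_pos hθ2 hθ12).le
    exact (c1.mul c2).measurable
  have hint : IntegrableOn (fun u : ℝ => (1 - u) ^ (θ1/θ12) * u ^ (θ2/θ12))
      (Set.Ioo 0 1) volume := by
    apply Measure.integrableOn_of_bounded (M := 1)
    · simp [Real.volume_Ioo]
    · exact hm.aestronglyMeasurable
    · rw [ae_restrict_iff' measurableSet_Ioo]
      refine Filter.Eventually.of_forall fun u hu => ?_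
      obtain ⟨hu0, hu1⟩ := hu
      rw [Real.norm_eq_abs, abs_of_nonneg
        (mul_nonneg (Real.rpow_nonneg (by linarith) _) (Real.rpow_nonneg hu0.le _))]
      have b1 : (1 - u) ^ (θ1/θ12) ≤ 1 :=
        Real.rpow_le_one (by linarith) (by linarith) (by positivity)
      have b2 : u ^ (θ2/θ12) ≤ 1 :=
        Real.rpow_le_one hu0.le hu1.le (by positivity)
      nlinarith [Real.rpow_nonneg (show (0:ℝ) ≤ 1 - u by linarith) (θ1/θ12),
        Real.rpow_nonneg hu0.le (θ2/θ12)]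
  have hnn : 0 ≤ᵐ[volume.restrict (Set.Ioo (0:ℝ) 1)]
      fun u : ℝ => (1 - u) ^ (θ1/θ12) * u ^ (θ2/θ12) := by
    refine (ae_restrict_iff' measurableSet_Ioo).mpr
      (Filter.Eventually.of_forall fun u hu => ?_)
    exact mul_nonneg (Real.rpow_nonneg (by linarith [hu.2]) _) (Real.rpow_nonneg hu.1.le _)
  rw [← ofReal_integral_eq_lintegral_ofReal hint hnn]
  congr 1
  rw [← integral_Ioc_eq_integral_Ioo, ← intervalIntegral.integral_of_le zero_le_one]
  have h := intervalIntegral.integral_comp_sub_left (a := (0:ℝ)) (b := 1)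
    (fun x => x ^ (θ1/θ12) * (1 - x) ^ (θ2/θ12)) 1
  simp only [sub_sub_cancel, sub_zero, sub_self] at h
  exact h
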